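/- arXiv:2110.08348 — 5 statements merged into one kernel-verified Lean document; each statement's English description precedes it below -/
import Mathlib

section
/- Under Assumptions 0 and 1, the function q ↦ ℓ(q) is strictly concave on S°, i.e. for all q₀, q₁ ∈ S° with q₀ ≠ q₁ and all t ∈ (0,1), ℓ(t·q₀ + (1−t)·q₁) > t·ℓ(q₀) + (1−t)·ℓ(q₁). -/
open scoped BigOperators

/-- Membership in the simplex `S = {q : q_k ≥ 0, Σ_k q_k = 1}`. -/
def memS {K : ℕ} (q : Fin K → ℝ) : Prop :=
  (∀ k, 0 ≤ q k) ∧ ∑ k, q k = 1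

/-- Membership in the relative interior `S° = {q ∈ S : q_k > 0 for all k}`. -/
def memSInt {K : ℕ} (q : Fin K → ℝ) : Prop :=
  (∀ k, 0 < q k) ∧ ∑ k, q k = 1

/-- The (normalized) log-likelihood of the admixture model, with values in the
extended reals, using the convention `x · log 0 = −∞` for `x > 0` (and the term
is `0` when `x = 0`). -/
noncomputable def ell {K I M : ℕ} (p : Fin K → Fin I → Fin M → ℝ)
    (x : Fin I → Fin M → ℕ) (q : Fin K → ℝ) : EReal :=
  ((1 / (2 * (M : ℝ)) : ℝ) : EReal) *
    ∑ m : Fin M, ∑ i : Fin I,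
      (if x i m = 0 then (0 : EReal)
       else if (∑ k : Fin K, q k * p k i m) ≤ 0 then (⊥ : EReal)
       else (((x i m : ℝ) * Real.log (∑ k : Fin K, q k * p k i m) : ℝ) : EReal))

lemma myCoeSum {α : Type*} (s : Finset α) (f : α → ℝ) :
    ((∑ a ∈ s, f a : ℝ) : EReal) = ∑ a ∈ s, ((f a : ℝ) : EReal) := by
  induction s using Finset.cons_induction with
  | empty => simp
  | cons a s ha ih => rw [Finset.sum_cons, Finset.sum_cons, EReal.coe_add, ih]

/-- Under Assumptions 0 and 1, the log-likelihood `q ↦ ℓ(q)` is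
strictly concave on `S°`. -/
theorem ell_strictConcave_on_interior
    (K I M : ℕ) (hK : 2 ≤ K) (hI : 2 ≤ I) (hM : 1 ≤ M)
    (p : Fin K → Fin I → Fin M → ℝ)
    (hp0 : ∀ k i m, 0 ≤ p k i m)
    (hp1 : ∀ k m, ∑ i, p k i m = 1)
    (x : Fin I → Fin M → ℕ)
    (hx2 : ∀ i m, x i m ≤ 2)
    (hxsum : ∀ m, ∑ i, x i m = 2)
    (hA0 : ∀ i m, 0 < x i m → ∃ k, 0 < p k i m)
    (hA1 : ∀ s : Fin K → ℝ, s ≠ 0 → ∑ k, s k = 0 →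
      ∃ i m, 0 < x i m ∧ ∑ k, s k * p k i m ≠ 0)
    (q₀ q₁ : Fin K → ℝ) (hq₀ : memSInt q₀) (hq₁ : memSInt q₁) (hne : q₀ ≠ q₁)
    (t : ℝ) (ht0 : 0 < t) (ht1 : t < 1) :
    (t : EReal) * ell p x q₀ + ((1 - t : ℝ) : EReal) * ell p x q₁ <
      ell p x (fun k => t * q₀ k + (1 - t) * q₁ k) := by
  classical
  set qt : Fin K → ℝ := fun k => t * q₀ k + (1 - t) * q₁ k with hqt_def
  set A : (Fin K → ℝ) → Fin I → Fin M → ℝ := fun q i m => ∑ k, q k * p k i m with hA_def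
  have hqt : memSInt qt := by
    constructor
    · intro k
      have := hq₀.1 k; have := hq₁.1 k
      have h1t : 0 < 1 - t := by linarith
      positivity
    · simp only [hqt_def, Finset.sum_add_distrib, ← Finset.mul_sum, hq₀.2, hq₁.2]
      ring
  have hApos : ∀ q : Fin K → ℝ, memSInt q → ∀ i m, 0 < x i m → 0 < A q i m := by
    intro q hq i m hx
    obtain ⟨k, hk⟩ := hA0 i m hx
    exact Finset.sum_pos' (fun k' _ => mul_nonneg (hq.1 k').le (hp0 k' i m))
      ⟨k, Finset.mem_univ k, mul_pos (hq.1 k) hk⟩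
  have hAt : ∀ i m, A qt i m = t * A q₀ i m + (1 - t) * A q₁ i m := by
    intro i m
    simp only [hA_def, hqt_def, add_mul, mul_assoc, Finset.sum_add_distrib, ← Finset.mul_sum]
  -- real-valued termwise log-likelihood
  set T : (Fin K → ℝ) → Fin I → Fin M → ℝ := fun q i m =>
    if x i m = 0 then (0 : ℝ) else (x i m : ℝ) * Real.log (A q i m) with hT_def
  set F : (Fin K → ℝ) → ℝ := fun q => ∑ m, ∑ i, T q i m with hF_def
  set c : ℝ := 1 / (2 * (M : ℝ)) with hc_def
  have hMpos : (0 : ℝ) < M := by exact_mod_cast hM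
  have hcpos : 0 < c := by rw [hc_def]; positivity
  have hell : ∀ q : Fin K → ℝ, memSInt q → ell p x q = ((c * F q : ℝ) : EReal) := by
    intro q hq
    have hterm : ∀ m i,
        (if x i m = 0 then (0 : EReal)
         else if (∑ k : Fin K, q k * p k i m) ≤ 0 then (⊥ : EReal)
         else (((x i m : ℝ) * Real.log (∑ k : Fin K, q k * p k i m) : ℝ) : EReal))
        = ((T q i m : ℝ) : EReal) := by
      intro m i
      by_cases h : x i m = 0
      · simp [hT_def, h]
      · have hpos := hApos q hq i m (Nat.pos_of_ne_zero h)
        simp only [hA_def] at hpos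
        simp [hT_def, hA_def, h, not_le.mpr hpos]
    rw [ell, EReal.coe_mul, hF_def]
    congr 1
    simp only [hterm]
    rw [myCoeSum]
    exact Finset.sum_congr rfl fun m _ => (myCoeSum _ _).symm
  rw [hell q₀ hq₀, hell q₁ hq₁, hell qt hqt, ← EReal.coe_mul, ← EReal.coe_mul,
    ← EReal.coe_add, EReal.coe_lt_coe_iff]
  -- termwise inequalities
  have hle : ∀ i m, t * T q₀ i m + (1 - t) * T q₁ i m ≤ T qt i m := by
    intro i m
    by_cases h : x i m = 0
    · simp [hT_def, h]
    · have ha := hApos q₀ hq₀ i m (Nat.pos_of_ne_zero h)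
      have hb := hApos q₁ hq₁ i m (Nat.pos_of_ne_zero h)
      have hlog : t * Real.log (A q₀ i m) + (1 - t) * Real.log (A q₁ i m) ≤
          Real.log (t * A q₀ i m + (1 - t) * A q₁ i m) := by
        have h' : t • Real.log (A q₀ i m) + (1 - t) • Real.log (A q₁ i m) ≤
            Real.log (t • A q₀ i m + (1 - t) • A q₁ i m) :=
          strictConcaveOn_log_Ioi.concaveOn.2 (Set.mem_Ioi.mpr ha)
            (Set.mem_Ioi.mpr hb) ht0.le (by linarith) (by ring)
        simpa [smul_eq_mul] using h'
      have hxnn : (0 : ℝ) ≤ (x i m : ℝ) := Nat.cast_nonneg _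
      simp only [hT_def, h, if_false, hAt i m]
      nlinarith [mul_le_mul_of_nonneg_left hlog hxnn]
  -- strict inequality at a witness
  have hsne : (fun k => q₀ k - q₁ k) ≠ 0 := by
    intro hcontra
    apply hne
    funext k
    have := congrFun hcontra k
    simp at this
    linarith
  have hssum : ∑ k, (q₀ k - q₁ k) = 0 := by
    rw [Finset.sum_sub_distrib, hq₀.2, hq₁.2]; ring
  obtain ⟨i₀, m₀, hxi₀, hAB⟩ := hA1 (fun k => q₀ k - q₁ k) hsne hssum
  have hABne : A q₀ i₀ m₀ ≠ A q₁ i₀ m₀ := by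
    intro hcontra
    apply hAB
    simp only [sub_mul, Finset.sum_sub_distrib]
    simp only [hA_def] at hcontra
    rw [hcontra]; ring
  have hlt : t * T q₀ i₀ m₀ + (1 - t) * T q₁ i₀ m₀ < T qt i₀ m₀ := by
    have ha := hApos q₀ hq₀ i₀ m₀ hxi₀
    have hb := hApos q₁ hq₁ i₀ m₀ hxi₀
    have hlog : t * Real.log (A q₀ i₀ m₀) + (1 - t) * Real.log (A q₁ i₀ m₀) <
        Real.log (t * A q₀ i₀ m₀ + (1 - t) * A q₁ i₀ m₀) := by
      have h' : t • Real.log (A q₀ i₀ m₀) + (1 - t) • Real.log (A q₁ i₀ m₀) <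
          Real.log (t • A q₀ i₀ m₀ + (1 - t) • A q₁ i₀ m₀) :=
        strictConcaveOn_log_Ioi.2 (Set.mem_Ioi.mpr ha) (Set.mem_Ioi.mpr hb)
          hABne ht0 (by linarith) (by ring)
      simpa [smul_eq_mul] using h'
    have hxpos : (0 : ℝ) < (x i₀ m₀ : ℝ) := by exact_mod_cast hxi₀
    have h0 : x i₀ m₀ ≠ 0 := hxi₀.ne'
    simp only [hT_def, h0, if_false, hAt i₀ m₀]
    nlinarith [mul_lt_mul_of_pos_left hlog hxpos]
  -- sum it up
  have hGle : ∀ m, (∑ i, (t * T q₀ i m + (1 - t) * T q₁ i m)) ≤ ∑ i, T qt i m :=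
    fun m => Finset.sum_le_sum fun i _ => hle i m
  have hGlt : (∑ i, (t * T q₀ i m₀ + (1 - t) * T q₁ i m₀)) < ∑ i, T qt i m₀ :=
    Finset.sum_lt_sum (fun i _ => hle i m₀) ⟨i₀, Finset.mem_univ i₀, hlt⟩
  have hFlt : t * F q₀ + (1 - t) * F q₁ < F qt := by
    have : (∑ m, ∑ i, (t * T q₀ i m + (1 - t) * T q₁ i m)) < ∑ m, ∑ i, T qt i m :=
      Finset.sum_lt_sum (fun m _ => hGle m) ⟨m₀, Finset.mem_univ m₀, hGlt⟩
    simpa [hF_def, Finset.sum_add_distrib, Finset.mul_sum] using this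
  nlinarith [mul_lt_mul_of_pos_left hFlt hcpos]
end

section
/- Under Assumptions 0 and 1, a point q* ∈ S° maximizes ℓ over S (i.e. ℓ(q) ≤ ℓ(q*) for all q ∈ S) if and only if g(q*)_k = 1 for every k = 1, …, K, where g(q)_k = (1/(2M)) Σ_{m=1}^M Σ_{i=1}^I x_{im} p_{kim}/⟨q, p_{·im}⟩ is the k-th component of the gradient of ℓ at q. -/
open scoped BigOperators

/-- The `k`-th component of the gradient of the log-likelihood at `q`. -/
noncomputable def gradEll {K I M : ℕ} (p : Fin K → Fin I → Fin M → ℝ)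
    (x : Fin I → Fin M → ℕ) (q : Fin K → ℝ) (k : Fin K) : ℝ :=
  (1 / (2 * (M : ℝ))) *
    ∑ m : Fin M, ∑ i : Fin I,
      (x i m : ℝ) * p k i m / (∑ l : Fin K, q l * p l i m)

/- ------------------- auxiliary material ------------------- -/

lemma sum_eq_bot' {α : Type*} [DecidableEq α] (s : Finset α) (f : α → EReal) (a : α)
    (ha : a ∈ s) (h : f a = ⊥) : ∑ x ∈ s, f x = ⊥ := by
  rw [← Finset.add_sum_erase _ _ ha, h, EReal.bot_add]

lemma coeSum' {α : Type*} (s : Finset α) (f : α → ℝ) :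
    ((∑ i ∈ s, f i : ℝ) : EReal) = ∑ i ∈ s, (f i : EReal) :=
  map_sum (⟨⟨Real.toEReal, EReal.coe_zero⟩, fun a b => EReal.coe_add a b⟩ : ℝ →+ EReal) f s

lemma log_lb' (u : ℝ) (hu : -(1/2 : ℝ) ≤ u) : u - 2*u^2 ≤ Real.log (1+u) := by
  have h1 : 0 < 1 + u := by linarith
  have h2 := Real.one_sub_inv_le_log_of_pos h1
  have h3 : u - 2*u^2 ≤ 1 - (1+u)⁻¹ := by
    have h4 : (1+u)⁻¹ * (1+u) = 1 := inv_mul_cancel₀ h1.ne'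
    nlinarith [sq_nonneg u, sq_nonneg (1+u)]
  linarith

/-- The real-valued log-likelihood (meaningful when all relevant inner products
are positive). -/
noncomputable def ellR {K I M : ℕ} (p : Fin K → Fin I → Fin M → ℝ)
    (x : Fin I → Fin M → ℕ) (q : Fin K → ℝ) : ℝ :=
  (1 / (2 * (M : ℝ))) *
    ∑ m : Fin M, ∑ i : Fin I,
      (if x i m = 0 then (0 : ℝ)
       else (x i m : ℝ) * Real.log (∑ k : Fin K, q k * p k i m))

lemma ell_eq_coe {K I M : ℕ} (p : Fin K → Fin I → Fin M → ℝ)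
    (x : Fin I → Fin M → ℕ) (q : Fin K → ℝ)
    (hpos : ∀ i m, x i m ≠ 0 → 0 < ∑ k, q k * p k i m) :
    ell p x q = ((ellR p x q : ℝ) : EReal) := by
  unfold ell ellR
  rw [EReal.coe_mul, coeSum']
  congr 1
  refine Finset.sum_congr rfl fun m _ => ?_
  rw [coeSum']
  refine Finset.sum_congr rfl fun i _ => ?_
  by_cases h : x i m = 0
  · simp [h]
  · simp [h, not_le.2 (hpos i m h)]

lemma ell_eq_bot {K I M : ℕ} (p : Fin K → Fin I → Fin M → ℝ)
    (x : Fin I → Fin M → ℕ) (q : Fin K → ℝ) (hM : 0 < M)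
    (i0 : Fin I) (m0 : Fin M) (hx : x i0 m0 ≠ 0)
    (hneg : (∑ k, q k * p k i0 m0) ≤ 0) : ell p x q = ⊥ := by
  unfold ell
  have hin : (∑ i : Fin I,
      (if x i m0 = 0 then (0 : EReal)
       else if (∑ k : Fin K, q k * p k i m0) ≤ 0 then (⊥ : EReal)
       else (((x i m0 : ℝ) * Real.log (∑ k : Fin K, q k * p k i m0) : ℝ) : EReal))) = ⊥ :=
    sum_eq_bot' _ _ i0 (Finset.mem_univ _) (by simp [hx, hneg])
  rw [sum_eq_bot' (Finset.univ : Finset (Fin M))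
    (fun m => ∑ i : Fin I,
      (if x i m = 0 then (0 : EReal)
       else if (∑ k : Fin K, q k * p k i m) ≤ 0 then (⊥ : EReal)
       else (((x i m : ℝ) * Real.log (∑ k : Fin K, q k * p k i m) : ℝ) : EReal)))
    m0 (Finset.mem_univ _) hin]
  exact EReal.coe_mul_bot_of_pos (by positivity)

set_option maxHeartbeats 1600000 in
/-- Under Assumptions 0 and 1, a point `q* ∈ S°` maximizes `ℓ` over
`S` if and only if the gradient of `ℓ` at `q*` is the all-ones vector. -/
theorem ell_max_iff_grad_eq_one
    (K I M : ℕ) (hK : 2 ≤ K) (hI : 2 ≤ I) (hM : 1 ≤ M)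
    (p : Fin K → Fin I → Fin M → ℝ)
    (hp0 : ∀ k i m, 0 ≤ p k i m)
    (hp1 : ∀ k m, ∑ i, p k i m = 1)
    (x : Fin I → Fin M → ℕ)
    (hx2 : ∀ i m, x i m ≤ 2)
    (hxsum : ∀ m, ∑ i, x i m = 2)
    (hA0 : ∀ i m, 0 < x i m → ∃ k, 0 < p k i m)
    (hA1 : ∀ s : Fin K → ℝ, s ≠ 0 → ∑ k, s k = 0 →
      ∃ i m, 0 < x i m ∧ ∑ k, s k * p k i m ≠ 0)
    (qstar : Fin K → ℝ) (hqstar : memSInt qstar) :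
    (∀ q, memS q → ell p x q ≤ ell p x qstar) ↔ (∀ k, gradEll p x qstar k = 1) := by
  classical
  have hMpos : (0:ℝ) < M := by exact_mod_cast hM
  have hc : (0:ℝ) < 1 / (2 * (M:ℝ)) := by positivity
  set b : Fin I → Fin M → ℝ := fun i m => ∑ k, qstar k * p k i m with hbdef
  have hb : ∀ i m, x i m ≠ 0 → 0 < b i m := by
    intro i m hx
    obtain ⟨k, hk⟩ := hA0 i m (Nat.pos_of_ne_zero hx)
    exact Finset.sum_pos' (fun j _ => mul_nonneg (hqstar.1 j).le (hp0 j i m))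
      ⟨k, Finset.mem_univ k, mul_pos (hqstar.1 k) hk⟩
  have hple1 : ∀ k i m, p k i m ≤ 1 := by
    intro k i m
    calc p k i m ≤ ∑ i, p k i m := Finset.single_le_sum (fun j _ => hp0 k j m) (Finset.mem_univ i)
      _ = 1 := hp1 k m
  have hxR : ∑ m : Fin M, ∑ i : Fin I, (x i m : ℝ) = 2 * M := by
    have h1 : ∀ m, ∑ i, (x i m : ℝ) = 2 := by
      intro m; exact_mod_cast hxsum m
    rw [Finset.sum_congr rfl fun m _ => h1 m]
    simp [Finset.sum_const, mul_comm]
  set G : Fin K → ℝ := fun k => ∑ m : Fin M, ∑ i : Fin I, (x i m : ℝ) * p k i m / b i m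
    with hGdef
  have hgradG : ∀ k, gradEll p x qstar k = (1 / (2 * (M:ℝ))) * G k := fun k => rfl
  have idA : ∀ q : Fin K → ℝ,
      ∑ m : Fin M, ∑ i : Fin I, (x i m : ℝ) * (∑ j, q j * p j i m) / b i m
        = ∑ j, q j * G j := by
    intro q
    calc ∑ m : Fin M, ∑ i : Fin I, (x i m : ℝ) * (∑ j, q j * p j i m) / b i m
        = ∑ m : Fin M, ∑ i : Fin I, ∑ j, q j * ((x i m : ℝ) * p j i m / b i m) := by
          refine Finset.sum_congr rfl fun m _ => Finset.sum_congr rfl fun i _ => ?_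
          rw [Finset.mul_sum, Finset.sum_div]
          exact Finset.sum_congr rfl fun j _ => by ring
      _ = ∑ m : Fin M, ∑ j, ∑ i : Fin I, q j * ((x i m : ℝ) * p j i m / b i m) :=
          Finset.sum_congr rfl fun m _ => Finset.sum_comm
      _ = ∑ j, ∑ m : Fin M, ∑ i : Fin I, q j * ((x i m : ℝ) * p j i m / b i m) :=
          Finset.sum_comm
      _ = ∑ j, q j * G j := by
          refine Finset.sum_congr rfl fun j _ => ?_
          rw [hGdef, Finset.mul_sum]
          exact Finset.sum_congr rfl fun m _ => (Finset.mul_sum _ _ _).symm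
  have hqG : ∑ j, qstar j * G j = 2 * M := by
    rw [← idA qstar, ← hxR]
    refine Finset.sum_congr rfl fun m _ => Finset.sum_congr rfl fun i _ => ?_
    by_cases hx : x i m = 0
    · simp [hx]
    · rw [mul_div_assoc, div_self (hb i m hx).ne', mul_one]
  have hqgrad : ∑ j, qstar j * gradEll p x qstar j = 1 := by
    have : ∑ j, qstar j * gradEll p x qstar j
        = (1 / (2 * (M:ℝ))) * ∑ j, qstar j * G j := by
      rw [Finset.mul_sum]
      exact Finset.sum_congr rfl fun j _ => by rw [hgradG]; ring
    rw [this, hqG]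
    field_simp
  constructor
  · -- maximality implies gradient is all-ones
    intro hmax
    have hle_all : ∀ k l, gradEll p x qstar k ≤ gradEll p x qstar l := by
      intro k l
      by_contra hlt'
      push_neg at hlt'
      have hE : 0 < G k - G l := by
        have h1 := hlt'
        rw [hgradG k, hgradG l] at h1
        have h2 := (mul_lt_mul_iff_right₀ hc).mp h1
        linarith
      have hkl : k ≠ l := by
        intro h; rw [h] at hlt'; exact lt_irrefl _ hlt'
      set E := G k - G l with hEdef
      obtain ⟨im0, -, hmin⟩ := Finset.exists_min_image (Finset.univ : Finset (Fin I × Fin M))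
        (fun im => if x im.1 im.2 = 0 then (1:ℝ) else b im.1 im.2)
        ⟨(⟨0, by omega⟩, ⟨0, by omega⟩), Finset.mem_univ _⟩
      set β := if x im0.1 im0.2 = 0 then (1:ℝ) else b im0.1 im0.2 with hβdef
      have hβpos : 0 < β := by
        rw [hβdef]; split
        · exact one_pos
        · next h => exact hb _ _ h
      have hβle : ∀ i m, x i m ≠ 0 → β ≤ b i m := by
        intro i m h
        have h2 := hmin (i, m) (Finset.mem_univ _)
        simpa [h] using h2
      set t := min (qstar l / 2) (min (β / 2) (E * β^2 / (8 * M))) with htdef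
      have hql := hqstar.1 l
      have ht0 : 0 < t := lt_min (by linarith)
        (lt_min (by linarith) (div_pos (mul_pos hE (pow_pos hβpos 2)) (by linarith)))
      have htl : t ≤ qstar l / 2 := min_le_left _ _
      have htβ : t ≤ β / 2 := le_trans (min_le_right _ _) (min_le_left _ _)
      have htE : t ≤ E * β^2 / (8 * M) := le_trans (min_le_right _ _) (min_le_right _ _)
      set q : Fin K → ℝ :=
        fun j => qstar j + (if j = k then t else 0) - (if j = l then t else 0) with hqdef
      have hqS : memS q := by
        constructor
        · intro j
          simp only [hqdef]
          split_ifs with h1 h2 h2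
          · exact absurd (h1.symm.trans h2) hkl
          · linarith [hqstar.1 j]
          · subst h2; linarith
          · linarith [hqstar.1 j]
        · simp only [hqdef]
          rw [Finset.sum_sub_distrib, Finset.sum_add_distrib]
          simp [Finset.sum_ite_eq', hqstar.2]
      have hinner : ∀ i m, ∑ j, q j * p j i m = b i m + t * (p k i m - p l i m) := by
        intro i m
        have h1 : ∀ j, q j * p j i m = qstar j * p j i m
            + (if j = k then t * p k i m else 0) - (if j = l then t * p l i m else 0) := by
          intro j
          simp only [hqdef]
          split_ifs with h1 h2 h2
          · exact absurd (h1.symm.trans h2) hkl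
          · subst h1; ring
          · subst h2; ring
          · ring
        rw [Finset.sum_congr rfl fun j _ => h1 j, Finset.sum_sub_distrib,
          Finset.sum_add_distrib]
        simp only [Finset.sum_ite_eq', Finset.mem_univ, if_pos]
        simp only [hbdef]
        ring
      have hqpos : ∀ i m, x i m ≠ 0 → 0 < ∑ j, q j * p j i m := by
        intro i m hx
        rw [hinner i m]
        have h1 := hβle i m hx
        have h2 := hple1 k i m
        have h3 := hple1 l i m
        have h4 := hp0 k i m
        have h5 := hp0 l i m
        nlinarith
      have hRle : ellR p x q ≤ ellR p x qstar := by
        have h := hmax q hqS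
        rw [ell_eq_coe p x q hqpos, ell_eq_coe p x qstar (fun i m h => hb i m h),
          EReal.coe_le_coe_iff] at h
        exact h
      have hSle : (∑ m : Fin M, ∑ i : Fin I, (if x i m = 0 then (0:ℝ)
            else (x i m:ℝ) * Real.log (∑ j, q j * p j i m)))
          ≤ ∑ m : Fin M, ∑ i : Fin I, (if x i m = 0 then (0:ℝ)
            else (x i m:ℝ) * Real.log (b i m)) := by
        have h := hRle
        unfold ellR at h
        exact le_of_mul_le_mul_left h hc
      have key2 : ∀ m i, (if x i m = 0 then (0:ℝ) else (x i m:ℝ) * Real.log (b i m))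
            + ((x i m:ℝ) * t * (p k i m - p l i m) / b i m - (x i m:ℝ) * (2 * t^2 / β^2))
          ≤ (if x i m = 0 then (0:ℝ)
            else (x i m:ℝ) * Real.log (∑ j, q j * p j i m)) := by
        intro m i
        by_cases hx : x i m = 0
        · simp [hx]
        · simp only [hx, if_false]
          rw [hinner i m]
          have hBpos : 0 < b i m := hb i m hx
          have hβB : β ≤ b i m := hβle i m hx
          have hδ1 : -1 ≤ p k i m - p l i m := by
            have := hple1 l i m; have := hp0 k i m; linarith
          have hδ2 : p k i m - p l i m ≤ 1 := by
            have := hple1 k i m; have := hp0 l i m; linarith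
          set δ := p k i m - p l i m with hδdef
          set u := t * δ / b i m with hudef
          have hu : -(1/2 : ℝ) ≤ u := by
            rw [hudef, le_div_iff₀ hBpos]
            nlinarith
          have h1u : (0:ℝ) < 1 + u := by linarith
          have hlog : Real.log (b i m + t*δ) = Real.log (b i m) + Real.log (1+u) := by
            rw [show b i m + t*δ = b i m * (1+u) by rw [hudef]; field_simp,
              Real.log_mul hBpos.ne' h1u.ne']
          have h2 : u - 2*u^2 ≤ Real.log (1+u) := log_lb' u hu
          have hδsq : δ^2 ≤ 1 := by nlinarith
          have hb2 : β^2 ≤ (b i m)^2 := by nlinarith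
          have hu2 : u^2 ≤ t^2/β^2 := by
            rw [hudef, div_pow]
            have h6 : (t*δ)^2 ≤ t^2 := by nlinarith [sq_nonneg t]
            exact div_le_div₀ (sq_nonneg t) h6 (pow_pos hβpos 2) hb2
          have hxnn : (0:ℝ) ≤ (x i m:ℝ) := Nat.cast_nonneg _
          have h5 : (x i m:ℝ) * t * δ / b i m = (x i m:ℝ) * u := by
            rw [hudef]; ring
          rw [hlog, h5]
          have h3 := mul_le_mul_of_nonneg_left h2 hxnn
          have h4' := mul_le_mul_of_nonneg_left
            (by linarith : 2*u^2 ≤ 2*(t^2/β^2)) hxnn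
          have e : (x i m:ℝ)*(2*(t^2/β^2)) = (x i m:ℝ)*(2*t^2/β^2) := by ring
          rw [e] at h4'
          linarith [h3, h4']
      have he : ∑ m : Fin M, ∑ i : Fin I, ((x i m:ℝ) * t * (p k i m - p l i m) / b i m
            - (x i m:ℝ) * (2 * t^2 / β^2))
          = t * E - 2*t^2/β^2 * (2*M) := by
        rw [show (∑ m : Fin M, ∑ i : Fin I, ((x i m:ℝ) * t * (p k i m - p l i m) / b i m
              - (x i m:ℝ) * (2 * t^2 / β^2)))
            = (∑ m : Fin M, ∑ i : Fin I, (t * ((x i m:ℝ) * p k i m / b i m)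
                - t * ((x i m:ℝ) * p l i m / b i m)))
              - (∑ m : Fin M, ∑ i : Fin I, (x i m:ℝ)) * (2 * t^2 / β^2) from ?_]
        · rw [hxR]
          simp only [Finset.sum_sub_distrib, ← Finset.mul_sum]
          rw [hEdef, hGdef]
          ring
        · rw [Finset.sum_mul]
          rw [← Finset.sum_sub_distrib]
          refine Finset.sum_congr rfl fun m _ => ?_
          rw [Finset.sum_mul, ← Finset.sum_sub_distrib]
          refine Finset.sum_congr rfl fun i _ => ?_
          ring
      have hsum2 : (∑ m : Fin M, ∑ i : Fin I, (if x i m = 0 then (0:ℝ)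
              else (x i m:ℝ) * Real.log (b i m)))
            + (t * E - 2*t^2/β^2 * (2*M))
          ≤ ∑ m : Fin M, ∑ i : Fin I, (if x i m = 0 then (0:ℝ)
              else (x i m:ℝ) * Real.log (∑ j, q j * p j i m)) := by
        have h := Finset.sum_le_sum
          (fun m (_ : m ∈ (Finset.univ : Finset (Fin M))) => Finset.sum_le_sum
            (fun i (_ : i ∈ (Finset.univ : Finset (Fin I))) => key2 m i))
        rw [← he]
        simp only [Finset.sum_add_distrib] at h
        exact h
      have hgain : 0 < t * E - 2*t^2/β^2 * (2*M) := by
        have hβ2 : (0:ℝ) < β^2 := pow_pos hβpos 2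
        have h8 : t * (8*M) ≤ E * β^2 := by
          rw [le_div_iff₀ (by linarith : (0:ℝ) < 8*M)] at htE
          linarith
        have h9 : 2*t^2/β^2 * (2*(M:ℝ)) = (4*M*t^2)/β^2 := by ring
        rw [h9, sub_pos, div_lt_iff₀ hβ2]
        nlinarith [mul_le_mul_of_nonneg_left h8 ht0.le, mul_pos hMpos (mul_pos ht0 ht0)]
      linarith
    intro k
    have heq : ∀ j, gradEll p x qstar j = gradEll p x qstar k :=
      fun j => le_antisymm (hle_all j k) (hle_all k j)
    have h1 : ∑ j, qstar j * gradEll p x qstar j = gradEll p x qstar k := by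
      rw [Finset.sum_congr rfl fun j _ => by rw [heq j]]
      rw [← Finset.sum_mul, hqstar.2, one_mul]
    rw [← h1, hqgrad]
  · -- gradient all-ones implies maximality
    intro hg q hq
    by_cases hcase : ∀ i m, x i m ≠ 0 → 0 < ∑ k, q k * p k i m
    · rw [ell_eq_coe p x q hcase, ell_eq_coe p x qstar (fun i m h => hb i m h),
        EReal.coe_le_coe_iff]
      unfold ellR
      refine mul_le_mul_of_nonneg_left ?_ hc.le
      have hG2M : ∀ j, G j = 2 * M := by
        intro j
        have := hg j
        rw [hgradG j] at this
        field_simp at this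
        linarith
      have key : ∀ m i, (if x i m = 0 then (0:ℝ)
            else (x i m : ℝ) * Real.log (∑ k, q k * p k i m))
          ≤ (if x i m = 0 then (0:ℝ) else (x i m : ℝ) * Real.log (b i m))
            + ((x i m : ℝ) * (∑ k, q k * p k i m) / b i m - (x i m : ℝ)) := by
        intro m i
        by_cases hx : x i m = 0
        · simp [hx]
        · simp only [hx, if_false]
          have ha : 0 < ∑ k, q k * p k i m := hcase i m hx
          have hbp : 0 < b i m := hb i m hx
          have h1 : Real.log ((∑ k, q k * p k i m) / b i m)
              ≤ (∑ k, q k * p k i m) / b i m - 1 :=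
            Real.log_le_sub_one_of_pos (div_pos ha hbp)
          rw [Real.log_div ha.ne' hbp.ne'] at h1
          have hxnn : (0:ℝ) ≤ (x i m : ℝ) := Nat.cast_nonneg _
          have h2 := mul_le_mul_of_nonneg_left h1 hxnn
          rw [mul_sub, mul_sub, mul_one] at h2
          rw [mul_div_assoc]
          linarith
      calc ∑ m : Fin M, ∑ i : Fin I, (if x i m = 0 then (0:ℝ)
              else (x i m : ℝ) * Real.log (∑ k, q k * p k i m))
          ≤ ∑ m : Fin M, ∑ i : Fin I, ((if x i m = 0 then (0:ℝ)
              else (x i m : ℝ) * Real.log (b i m))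
              + ((x i m : ℝ) * (∑ k, q k * p k i m) / b i m - (x i m : ℝ))) :=
            Finset.sum_le_sum fun m _ => Finset.sum_le_sum fun i _ => key m i
        _ = (∑ m : Fin M, ∑ i : Fin I, (if x i m = 0 then (0:ℝ)
              else (x i m : ℝ) * Real.log (b i m)))
              + ((∑ m : Fin M, ∑ i : Fin I, (x i m : ℝ) * (∑ k, q k * p k i m) / b i m)
                - ∑ m : Fin M, ∑ i : Fin I, (x i m : ℝ)) := by
            simp only [Finset.sum_add_distrib, Finset.sum_sub_distrib]
        _ = ∑ m : Fin M, ∑ i : Fin I, (if x i m = 0 then (0:ℝ)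
              else (x i m : ℝ) * Real.log (b i m)) := by
            rw [idA q, hxR]
            have : ∑ j, q j * G j = 2 * M := by
              rw [Finset.sum_congr rfl fun j _ => by rw [hG2M j]]
              rw [← Finset.sum_mul, hq.2, one_mul]
            rw [this]
            ring
    · push_neg at hcase
      obtain ⟨i, m, hx, hle⟩ := hcase
      rw [ell_eq_bot p x q (by omega) i m hx hle]
      exact bot_le
end

section
/- Let q ∈ ℝ^K satisfy ⟨q, p_{·im}⟩ > 0 for all i, m, and let A(q) := (1/M) Σ_{m=1}^M Σ_{i=1}^I (p_{·im} · p_{·im}ᵀ)/⟨q, p_{·im}⟩. Then (1/(4M²)) Σ_{m=1}^M Σ_{i=1}^I Σ_{j=1}^I [2⟨q, p_{·im}⟩(δ_{ij} − ⟨q, p_{·jm}⟩)/(⟨q, p_{·im}⟩·⟨q, p_{·jm}⟩)] · (p_{·im} · p_{·jm}ᵀ) = (1/(2M)) · (A(q) − 𝟙·𝟙ᵀ), where δ_{ij} is the Kronecker delta and 𝟙 ∈ ℝ^K is the all-ones vector. -/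
open scoped BigOperators

/-- The matrix `A(q) = (1/M) Σ_m Σ_i (p_{·im} p_{·im}ᵀ)/⟨q, p_{·im}⟩`. -/
noncomputable def Amat {K I M : ℕ} (p : Fin K → Fin I → Fin M → ℝ)
    (q : Fin K → ℝ) : Matrix (Fin K) (Fin K) ℝ :=
  (1 / (M : ℝ)) •
    ∑ m : Fin M, ∑ i : Fin I,
      (∑ r : Fin K, q r * p r i m)⁻¹ •
        Matrix.vecMulVec (fun k => p k i m) (fun k => p k i m)

/-- The covariance matrix of the score in the admixture model
equals `(1/(2M)) (A(q) − 𝟙·𝟙ᵀ)`. -/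
theorem score_covariance_eq
    (K I M : ℕ) (hK : 2 ≤ K) (hI : 2 ≤ I) (hM : 1 ≤ M)
    (p : Fin K → Fin I → Fin M → ℝ)
    (hp0 : ∀ k i m, 0 ≤ p k i m)
    (hp1 : ∀ k m, ∑ i, p k i m = 1)
    (q : Fin K → ℝ)
    (hq : ∀ i m, 0 < ∑ r : Fin K, q r * p r i m) :
    (1 / (4 * (M : ℝ) ^ 2)) •
      (∑ m : Fin M, ∑ i : Fin I, ∑ j : Fin I,
        ((2 * (∑ r : Fin K, q r * p r i m) *
            ((if i = j then (1 : ℝ) else 0) - ∑ r : Fin K, q r * p r j m)) /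
          ((∑ r : Fin K, q r * p r i m) * (∑ r : Fin K, q r * p r j m))) •
          Matrix.vecMulVec (fun k => p k i m) (fun k => p k j m)) =
    (1 / (2 * (M : ℝ))) •
      (Amat p q - Matrix.vecMulVec (fun _ => (1 : ℝ)) (fun _ => (1 : ℝ))) := by
  have hM0 : (M : ℝ) ≠ 0 := by positivity
  ext k l
  simp only [Amat, Matrix.smul_apply, Matrix.sum_apply, Matrix.sub_apply,
    Matrix.vecMulVec_apply, smul_eq_mul]
  have key : ∀ m : Fin M,
      (∑ i : Fin I, ∑ j : Fin I,
        ((2 * (∑ r : Fin K, q r * p r i m) *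
            ((if i = j then (1 : ℝ) else 0) - ∑ r : Fin K, q r * p r j m)) /
          ((∑ r : Fin K, q r * p r i m) * (∑ r : Fin K, q r * p r j m))) *
          (p k i m * p l j m))
      = 2 * (∑ i : Fin I, (∑ r : Fin K, q r * p r i m)⁻¹ * (p k i m * p l i m)) - 2 := by
    intro m
    set s : Fin I → ℝ := fun i => ∑ r : Fin K, q r * p r i m with hs
    have hsne : ∀ i, s i ≠ 0 := fun i => (hq i m).ne'
    have hcoef : ∀ i j : Fin I,
        (2 * s i * ((if i = j then (1 : ℝ) else 0) - s j)) / (s i * s j)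
        = (if i = j then 2 * (s j)⁻¹ else 0) - 2 := by
      intro i j
      rw [div_eq_iff (mul_ne_zero (hsne i) (hsne j))]
      by_cases h : i = j
      · subst h
        simp only [eq_self_iff_true, if_true]
        linear_combination (-2 * s i) * inv_mul_cancel₀ (hsne i)
      · simp only [if_neg h]
        ring
    calc (∑ i : Fin I, ∑ j : Fin I,
          ((2 * s i * ((if i = j then (1 : ℝ) else 0) - s j)) / (s i * s j)) *
            (p k i m * p l j m))
        = ∑ i : Fin I, ∑ j : Fin I,
            (((if i = j then 2 * (s j)⁻¹ else 0) * (p k i m * p l j m))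
              - 2 * (p k i m * p l j m)) := by
          refine Finset.sum_congr rfl fun i _ => Finset.sum_congr rfl fun j _ => ?_
          rw [hcoef i j]; ring
      _ = (∑ i : Fin I, ∑ j : Fin I,
            (if i = j then 2 * (s j)⁻¹ else 0) * (p k i m * p l j m))
          - 2 * ((∑ i : Fin I, p k i m) * (∑ j : Fin I, p l j m)) := by
          rw [Finset.sum_mul_sum]
          simp only [Finset.mul_sum, ← Finset.sum_sub_distrib]
      _ = 2 * (∑ i : Fin I, (s i)⁻¹ * (p k i m * p l i m)) - 2 := by
          rw [hp1 k m, hp1 l m]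
          simp only [mul_one, Finset.mul_sum]
          congr 1
          refine Finset.sum_congr rfl fun i _ => ?_
          simp only [ite_mul, zero_mul, Finset.sum_ite_eq, Finset.mem_univ, if_true]
          ring
  rw [Finset.sum_congr rfl fun m _ => key m, Finset.sum_sub_distrib, ← Finset.mul_sum]
  set S := ∑ m : Fin M, ∑ i : Fin I,
      (∑ r : Fin K, q r * p r i m)⁻¹ * (p k i m * p l i m) with hS
  simp only [Finset.sum_const, Finset.card_univ, Fintype.card_fin, nsmul_eq_mul]
  field_simp
  ring
end

section
/- Under Assumptions 0 and 1, for q* ∈ S° the following are equivalent: (i) q* is the global maximum of ℓ over S, i.e. ℓ(q) ≤ ℓ(q*) for all q ∈ S; (ii) q* is a fixed point of L, i.e. q*_k · g(q*)_k = q*_k for all k = 1, …, K. -/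
open scoped BigOperators

lemma aux_coe_sum {α : Type*} (s : Finset α) (f : α → ℝ) :
    ((∑ a ∈ s, f a : ℝ) : EReal) = ∑ a ∈ s, (f a : EReal) :=
  map_sum (⟨⟨(↑· : ℝ → EReal), EReal.coe_zero⟩, EReal.coe_add⟩ : ℝ →+ EReal) f s

lemma aux_sum_bot {α : Type*} [DecidableEq α] (s : Finset α) (f : α → EReal) (a : α) (ha : a ∈ s)
    (hfa : f a = ⊥) : ∑ b ∈ s, f b = ⊥ := by
  rw [← Finset.add_sum_erase s f ha, hfa, EReal.bot_add]

lemma aux_log_lb (u : ℝ) (hu : -(1/2) ≤ u) : u - 2*u^2 ≤ Real.log (1+u) := by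
  have h1 : (0:ℝ) < 1 + u := by linarith
  have h2 := Real.log_le_sub_one_of_pos (show (0:ℝ) < (1+u)⁻¹ by positivity)
  rw [Real.log_inv] at h2
  have h3 : 1 - 1/(1+u) ≤ Real.log (1+u) := by
    rw [one_div]; linarith
  have h4 : u - 2*u^2 ≤ 1 - 1/(1+u) := by
    have h5 : 1 - 1/(1+u) = u/(1+u) := by field_simp; ring
    rw [h5, le_div_iff₀ h1]
    nlinarith [mul_nonneg (sq_nonneg u) (by linarith : (0:ℝ) ≤ 1+2*u)]
  linarith

set_option maxHeartbeats 1000000 in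
/-- Under Assumptions 0 and 1, a point `q* ∈ S°` is the global
maximum of `ℓ` over `S` if and only if it is a fixed point of
`L(q)_k = q_k · g(q)_k`. -/
theorem ell_max_iff_fixed_point
    (K I M : ℕ) (hK : 2 ≤ K) (hI : 2 ≤ I) (hM : 1 ≤ M)
    (p : Fin K → Fin I → Fin M → ℝ)
    (hp0 : ∀ k i m, 0 ≤ p k i m)
    (hp1 : ∀ k m, ∑ i, p k i m = 1)
    (x : Fin I → Fin M → ℕ)
    (hx2 : ∀ i m, x i m ≤ 2)
    (hxsum : ∀ m, ∑ i, x i m = 2)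
    (hA0 : ∀ i m, 0 < x i m → ∃ k, 0 < p k i m)
    (hA1 : ∀ s : Fin K → ℝ, s ≠ 0 → ∑ k, s k = 0 →
      ∃ i m, 0 < x i m ∧ ∑ k, s k * p k i m ≠ 0)
    (qstar : Fin K → ℝ) (hqstar : memSInt qstar) :
    (∀ q, memS q → ell p x q ≤ ell p x qstar) ↔
      (∀ k, qstar k * gradEll p x qstar k = qstar k) := by
  classical
  obtain ⟨hqpos, hqsum⟩ := hqstar
  have hM0 : (0:ℝ) < M := by
    have : 0 < M := hM
    exact_mod_cast this
  have hM' : (M:ℝ) ≠ 0 := hM0.ne'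
  obtain ⟨c, hc_def⟩ : ∃ c : ℝ, c = 1 / (2 * (M:ℝ)) := ⟨_, rfl⟩
  have hc : 0 < c := by rw [hc_def]; positivity
  obtain ⟨a, ha⟩ : ∃ a : Fin I → Fin M → ℝ,
      ∀ i m, a i m = ∑ k, qstar k * p k i m := ⟨_, fun _ _ => rfl⟩
  have hapos : ∀ i m, 0 < x i m → 0 < a i m := by
    intro i m hx
    obtain ⟨k, hk⟩ := hA0 i m hx
    have h1 : qstar k * p k i m ≤ ∑ l, qstar l * p l i m :=
      Finset.single_le_sum (f := fun l => qstar l * p l i m)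
        (fun l _ => mul_nonneg (hqpos l).le (hp0 l i m)) (Finset.mem_univ k)
    have h2 := mul_pos (hqpos k) hk
    rw [ha]
    linarith
  have hple1 : ∀ k i m, p k i m ≤ 1 := by
    intro k i m
    have h1 : p k i m ≤ ∑ j, p k j m :=
      Finset.single_le_sum (fun j _ => hp0 k j m) (Finset.mem_univ i)
    rw [hp1 k m] at h1; exact h1
  -- the real-valued log-likelihood
  obtain ⟨F, hF⟩ : ∃ F : (Fin K → ℝ) → ℝ,
      ∀ q, F q = ∑ m, ∑ i, (x i m : ℝ) * Real.log (∑ k, q k * p k i m) :=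
    ⟨_, fun _ => rfl⟩
  have hell_eq : ∀ q : Fin K → ℝ, (∀ i m, 0 < x i m → 0 < ∑ k, q k * p k i m) →
      ell p x q = ((c * F q : ℝ) : EReal) := by
    intro q hq
    have hsum : (∑ m : Fin M, ∑ i : Fin I,
        (if x i m = 0 then (0 : EReal)
         else if (∑ k : Fin K, q k * p k i m) ≤ 0 then (⊥ : EReal)
         else (((x i m : ℝ) * Real.log (∑ k : Fin K, q k * p k i m) : ℝ) : EReal)))
        = ((F q : ℝ) : EReal) := by
      rw [hF, aux_coe_sum]
      refine Finset.sum_congr rfl fun m _ => ?_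
      rw [aux_coe_sum]
      refine Finset.sum_congr rfl fun i _ => ?_
      by_cases hx : x i m = 0
      · simp [hx]
      · have hx' : 0 < x i m := Nat.pos_of_ne_zero hx
        have hb := hq i m hx'
        rw [if_neg hx, if_neg (not_le.mpr hb)]
    rw [ell, hsum, ← EReal.coe_mul, hc_def]
  have hell_bot : ∀ q : Fin K → ℝ,
      (∃ i m, 0 < x i m ∧ (∑ k, q k * p k i m) ≤ 0) → ell p x q = ⊥ := by
    rintro q ⟨i, m, hx, hb⟩
    rw [ell]
    have hterm : (if x i m = 0 then (0 : EReal)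
         else if (∑ k : Fin K, q k * p k i m) ≤ 0 then (⊥ : EReal)
         else (((x i m : ℝ) * Real.log (∑ k : Fin K, q k * p k i m) : ℝ) : EReal)) = ⊥ := by
      rw [if_neg (Nat.pos_iff_ne_zero.mp hx), if_pos hb]
    have hinner : (∑ i' : Fin I,
        (if x i' m = 0 then (0 : EReal)
         else if (∑ k : Fin K, q k * p k i' m) ≤ 0 then (⊥ : EReal)
         else (((x i' m : ℝ) * Real.log (∑ k : Fin K, q k * p k i' m) : ℝ) : EReal))) = ⊥ :=
      aux_sum_bot Finset.univ _ i (Finset.mem_univ i) hterm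
    have houter : (∑ m' : Fin M, ∑ i' : Fin I,
        (if x i' m' = 0 then (0 : EReal)
         else if (∑ k : Fin K, q k * p k i' m') ≤ 0 then (⊥ : EReal)
         else (((x i' m' : ℝ) * Real.log (∑ k : Fin K, q k * p k i' m') : ℝ) : EReal))) = ⊥ :=
      aux_sum_bot Finset.univ _ m (Finset.mem_univ m) hinner
    rw [houter]
    exact EReal.mul_bot_of_pos (EReal.coe_pos.mpr (by positivity))
  have hxtot : ∑ m : Fin M, ∑ i : Fin I, (x i m : ℝ) = 2 * M := by
    have h1 : ∀ m : Fin M, ∑ i, (x i m : ℝ) = 2 := by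
      intro m
      rw [← Nat.cast_sum, hxsum m]; norm_num
    simp only [h1, Finset.sum_const, Finset.card_univ, Fintype.card_fin, nsmul_eq_mul]
    ring
  have hgrad_def : ∀ k, gradEll p x qstar k
      = c * ∑ m, ∑ i, (x i m : ℝ) * p k i m / a i m := by
    intro k
    rw [gradEll, hc_def]
    congr 1
    refine Finset.sum_congr rfl fun m _ => Finset.sum_congr rfl fun i _ => ?_
    rw [ha]
  -- the sum-swap identity
  have hswap : ∀ q : Fin K → ℝ,
      ∑ k, q k * (∑ m, ∑ i, (x i m : ℝ) * p k i m / a i m)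
        = ∑ m, ∑ i, (x i m : ℝ) * (∑ k, q k * p k i m) / a i m := by
    intro q
    simp_rw [Finset.mul_sum]
    rw [Finset.sum_comm]
    refine Finset.sum_congr rfl fun m _ => ?_
    rw [Finset.sum_comm]
    refine Finset.sum_congr rfl fun i _ => ?_
    rw [Finset.sum_div]
    refine Finset.sum_congr rfl fun k _ => by ring
  have hxa : ∑ m : Fin M, ∑ i : Fin I, (x i m : ℝ) * (∑ k, qstar k * p k i m) / a i m
      = 2 * M := by
    rw [← hxtot]
    refine Finset.sum_congr rfl fun m _ => Finset.sum_congr rfl fun i _ => ?_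
    by_cases hx : x i m = 0
    · simp [hx]
    · have hx' : 0 < x i m := Nat.pos_of_ne_zero hx
      have ha' : a i m ≠ 0 := (hapos i m hx').ne'
      rw [← ha i m, mul_div_assoc, div_self ha', mul_one]
  have hG1 : ∑ k, qstar k * gradEll p x qstar k = 1 := by
    have h1 : ∑ k, qstar k * gradEll p x qstar k
        = c * ∑ k, qstar k * (∑ m, ∑ i, (x i m : ℝ) * p k i m / a i m) := by
      rw [Finset.mul_sum]
      refine Finset.sum_congr rfl fun k _ => ?_
      rw [hgrad_def k]; ring
    rw [h1, hswap qstar, hxa, hc_def]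
    field_simp
  constructor
  · -- max ⇒ fixed point
    intro hmax
    have hle : ∀ k0, gradEll p x qstar k0 ≤ 1 := by
      intro k0
      by_contra hgt
      push_neg at hgt
      obtain ⟨r, hr⟩ : ∃ r : Fin I → Fin M → ℝ,
          ∀ i m, r i m = p k0 i m / a i m - 1 := ⟨_, fun _ _ => rfl⟩
      obtain ⟨δ, hδ_def⟩ : ∃ δ : ℝ, δ = ∑ m, ∑ i, (x i m : ℝ) * r i m := ⟨_, rfl⟩
      obtain ⟨R, hR_def⟩ : ∃ R : ℝ, R = ∑ m, ∑ i, (x i m : ℝ) * (r i m)^2 := ⟨_, rfl⟩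
      have hR0 : 0 ≤ R := by
        rw [hR_def]
        refine Finset.sum_nonneg fun m _ => Finset.sum_nonneg fun i _ =>
          mul_nonneg (Nat.cast_nonneg _) (sq_nonneg _)
      have hδpos : 0 < δ := by
        have h1 : ∀ (m : Fin M) (i : Fin I), (x i m : ℝ) * r i m
            = (x i m : ℝ) * p k0 i m / a i m - (x i m : ℝ) := by
          intro m i; rw [hr]; ring
        have h2 : δ = (∑ m, ∑ i, (x i m : ℝ) * p k0 i m / a i m) - 2 * M := by
          rw [hδ_def]
          simp_rw [h1]
          rw [← hxtot]
          simp [Finset.sum_sub_distrib]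
        have h5 : (1:ℝ) < c * ∑ m, ∑ i, (x i m : ℝ) * p k0 i m / a i m := by
          rw [← hgrad_def k0]; exact hgt
        have h6 : (0:ℝ) < 2 * (M:ℝ) := by linarith
        rw [hc_def, one_div, inv_mul_eq_div, lt_div_iff₀ h6] at h5
        rw [h2]
        linarith
      obtain ⟨t, ht_def⟩ : ∃ t : ℝ, t = min (1/2) (δ / (2*(R+1))) := ⟨_, rfl⟩
      have ht0 : 0 < t := by
        rw [ht_def]
        exact lt_min (by norm_num) (by positivity)
      have ht2 : t ≤ 1/2 := by rw [ht_def]; exact min_le_left _ _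
      have htd : 2*t*R < δ := by
        have h1 : t ≤ δ / (2*(R+1)) := by rw [ht_def]; exact min_le_right _ _
        rw [le_div_iff₀ (by positivity)] at h1
        nlinarith
      obtain ⟨qt, hqt⟩ : ∃ qt : Fin K → ℝ,
          ∀ k, qt k = (1-t) * qstar k + t * (if k = k0 then 1 else 0) :=
        ⟨_, fun _ => rfl⟩
      have hqtS : memS qt := by
        constructor
        · intro k
          rw [hqt k]
          have h1 : 0 ≤ (1-t) * qstar k := mul_nonneg (by linarith) (hqpos k).le
          rcases eq_or_ne k k0 with h | h
          · rw [if_pos h, mul_one]; linarith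
          · rw [if_neg h, mul_zero, add_zero]; linarith
        · simp_rw [hqt]
          rw [Finset.sum_add_distrib, ← Finset.mul_sum, ← Finset.mul_sum, hqsum,
            Finset.sum_ite_eq' Finset.univ k0 (fun _ => (1:ℝ))]
          simp
      have hb : ∀ i m, 0 < x i m →
          ∑ k, qt k * p k i m = a i m * (1 + t * r i m) := by
        intro i m hx
        have ha0 : a i m ≠ 0 := (hapos i m hx).ne'
        have h1 : ∑ k, qt k * p k i m = (1-t) * (∑ k, qstar k * p k i m) + t * p k0 i m := by
          simp_rw [hqt]
          have h2 : ∀ k : Fin K,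
              ((1-t) * qstar k + t * (if k = k0 then (1:ℝ) else 0)) * p k i m
              = (1-t) * (qstar k * p k i m) + t * (if k = k0 then p k i m else 0) := by
            intro k
            by_cases h : k = k0 <;> simp [h] <;> ring
          simp_rw [h2]
          rw [Finset.sum_add_distrib, ← Finset.mul_sum, ← Finset.mul_sum,
            Finset.sum_ite_eq' Finset.univ k0 (fun k => p k i m)]
          simp
        rw [h1, hr, ← ha i m]
        field_simp
        ring
      have hu : ∀ i m, 0 < x i m → -(1/2) ≤ t * r i m := by
        intro i m hx
        have ha' := hapos i m hx
        have h1 : 0 ≤ p k0 i m / a i m := div_nonneg (hp0 k0 i m) ha'.le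
        have h2 : -1 ≤ r i m := by rw [hr]; linarith
        nlinarith
      have hu2 : ∀ i m, 0 < x i m → 0 < 1 + t * r i m := by
        intro i m hx
        have := hu i m hx
        linarith
      have hqtadm : ∀ i m, 0 < x i m → 0 < ∑ k, qt k * p k i m := by
        intro i m hx
        rw [hb i m hx]
        exact mul_pos (hapos i m hx) (hu2 i m hx)
      -- per-term lower bound
      have key : ∀ (m : Fin M) (i : Fin I),
          (x i m : ℝ) * Real.log (a i m)
            + (t * ((x i m : ℝ) * r i m) - 2*t^2 * ((x i m : ℝ) * (r i m)^2))
          ≤ (x i m : ℝ) * Real.log (∑ k, qt k * p k i m) := by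
        intro m i
        by_cases hx0 : x i m = 0
        · simp [hx0]
        · have hx' : 0 < x i m := Nat.pos_of_ne_zero hx0
          rw [hb i m hx', Real.log_mul (hapos i m hx').ne' (hu2 i m hx').ne']
          have hlb := aux_log_lb (t * r i m) (hu i m hx')
          have hxnn : (0:ℝ) ≤ x i m := Nat.cast_nonneg _
          have h2 := mul_le_mul_of_nonneg_left hlb hxnn
          nlinarith [h2]
      have hsum := Finset.sum_le_sum
        (fun m (_ : m ∈ Finset.univ) => Finset.sum_le_sum
          (fun i (_ : i ∈ Finset.univ) => key m i))
      have hsplit : ∑ m : Fin M, ∑ i : Fin I,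
          ((x i m : ℝ) * Real.log (a i m)
            + (t * ((x i m : ℝ) * r i m) - 2*t^2 * ((x i m : ℝ) * (r i m)^2)))
          = (∑ m, ∑ i, (x i m : ℝ) * Real.log (a i m)) + (t * δ - 2*t^2 * R) := by
        rw [hδ_def, hR_def]
        simp only [Finset.sum_add_distrib, Finset.sum_sub_distrib, Finset.mul_sum]
      rw [hsplit] at hsum
      have hFst : F qstar = ∑ m, ∑ i, (x i m : ℝ) * Real.log (a i m) := by
        rw [hF]
        refine Finset.sum_congr rfl fun m _ => Finset.sum_congr rfl fun i _ => ?_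
        rw [ha]
      have hFqt : F qt = ∑ m, ∑ i, (x i m : ℝ) * Real.log (∑ k, qt k * p k i m) := hF qt
      have hgain : 0 < t * δ - 2*t^2*R := by nlinarith
      have hFlt : F qstar < F qt := by
        rw [hFst, hFqt]; linarith
      have hstaradm : ∀ i m, 0 < x i m → 0 < ∑ k, qstar k * p k i m := by
        intro i m hx; rw [← ha]; exact hapos i m hx
      have hlt : ell p x qstar < ell p x qt := by
        rw [hell_eq qstar hstaradm, hell_eq qt hqtadm, EReal.coe_lt_coe_iff]
        exact mul_lt_mul_of_pos_left hFlt hc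
      exact absurd (hmax qt hqtS) (not_le.mpr hlt)
    -- conclude each gradient component equals 1
    have hsum0 : ∑ k, qstar k * (1 - gradEll p x qstar k) = 0 := by
      simp only [mul_sub, mul_one]
      rw [Finset.sum_sub_distrib, hqsum, hG1]
      ring
    intro k
    have hz := (Finset.sum_eq_zero_iff_of_nonneg
      (fun k _ => mul_nonneg (hqpos k).le (by linarith [hle k]))).mp hsum0 k (Finset.mem_univ k)
    have hk := (hqpos k).ne'
    rcases mul_eq_zero.mp hz with h' | h'
    · exact absurd h' hk
    · have : gradEll p x qstar k = 1 := by linarith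
      rw [this, mul_one]
  · -- fixed point ⇒ max
    intro hfix
    have hg1 : ∀ k, gradEll p x qstar k = 1 := by
      intro k
      have hk := (hqpos k).ne'
      exact mul_left_cancel₀ hk ((hfix k).trans (mul_one _).symm)
    have hGk : ∀ k, (∑ m, ∑ i, (x i m : ℝ) * p k i m / a i m) = 2 * M := by
      intro k
      have h1 := hgrad_def k
      rw [hg1 k, hc_def] at h1
      field_simp at h1
      linarith
    intro q hq
    by_cases hadm : ∀ i m, 0 < x i m → 0 < ∑ k, q k * p k i m
    · have hstaradm : ∀ i m, 0 < x i m → 0 < ∑ k, qstar k * p k i m := by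
        intro i m hx; rw [← ha]; exact hapos i m hx
      rw [hell_eq q hadm, hell_eq qstar hstaradm, EReal.coe_le_coe_iff]
      have key : ∀ (m : Fin M) (i : Fin I),
          (x i m : ℝ) * Real.log (∑ k, q k * p k i m)
            - (x i m : ℝ) * Real.log (∑ k, qstar k * p k i m)
          ≤ (x i m : ℝ) * (∑ k, q k * p k i m) / a i m - (x i m : ℝ) := by
        intro m i
        by_cases hx0 : x i m = 0
        · simp [hx0]
        · have hx' : 0 < x i m := Nat.pos_of_ne_zero hx0
          have hbq := hadm i m hx'
          have ha' := hapos i m hx'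
          rw [← ha i m]
          have hlog : Real.log (∑ k, q k * p k i m) - Real.log (a i m)
              ≤ (∑ k, q k * p k i m) / a i m - 1 := by
            have h1 := Real.log_le_sub_one_of_pos
              (show 0 < (∑ k, q k * p k i m) / a i m from div_pos hbq ha')
            rwa [Real.log_div hbq.ne' ha'.ne'] at h1
          have hxpos : (0:ℝ) < x i m := by exact_mod_cast hx'
          have h2 := mul_le_mul_of_nonneg_left hlog hxpos.le
          have e1 : (x i m : ℝ) * (Real.log (∑ k, q k * p k i m) - Real.log (a i m))
              = (x i m : ℝ) * Real.log (∑ k, q k * p k i m)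
                - (x i m : ℝ) * Real.log (a i m) := by ring
          have e2 : (x i m : ℝ) * ((∑ k, q k * p k i m) / a i m - 1)
              = (x i m : ℝ) * (∑ k, q k * p k i m) / a i m - (x i m : ℝ) := by ring
          rw [e1, e2] at h2
          exact h2
      have hsum := Finset.sum_le_sum
        (fun m (_ : m ∈ Finset.univ) => Finset.sum_le_sum
          (fun i (_ : i ∈ Finset.univ) => key m i))
      have hrhs : ∑ m : Fin M, ∑ i : Fin I,
          ((x i m : ℝ) * (∑ k, q k * p k i m) / a i m - (x i m : ℝ)) = 0 := by
        have h1 : ∑ m : Fin M, ∑ i : Fin I,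
            (x i m : ℝ) * (∑ k, q k * p k i m) / a i m = 2 * M := by
          rw [← hswap q]
          simp_rw [hGk]
          rw [← Finset.sum_mul, hq.2]
          ring
        simp only [Finset.sum_sub_distrib]
        rw [h1, hxtot]
        ring
      have hlhs : ∑ m : Fin M, ∑ i : Fin I,
          ((x i m : ℝ) * Real.log (∑ k, q k * p k i m)
            - (x i m : ℝ) * Real.log (∑ k, qstar k * p k i m)) = F q - F qstar := by
        simp only [Finset.sum_sub_distrib]
        rw [hF, hF]
      rw [hrhs, hlhs] at hsum
      have : F q ≤ F qstar := by linarith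
      exact mul_le_mul_of_nonneg_left this hc.le
    · push_neg at hadm
      obtain ⟨i, m, hx, hb⟩ := hadm
      rw [hell_bot q ⟨i, m, hx, hb⟩]
      exact bot_le
end

section
/- Let q ∈ ℝ^K with q_k > 0 for all k, and let A be a symmetric positive definite K×K real matrix with nonnegative entries such that the matrix B := diag(q)·A satisfies 𝟙ᵀ·B = 𝟙ᵀ (every column of B sums to 1). Then every eigenvalue of B (over ℂ) is real and lies in the interval (0, 1]; consequently, every eigenvalue of E_K − B is real, lies in [0, 1), and in particular has absolute value strictly less than 1. -/
open scoped BigOperators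
open Matrix

private lemma eig_key
    (K : ℕ)
    (q : Fin K → ℝ) (hq : ∀ k, 0 < q k)
    (A : Matrix (Fin K) (Fin K) ℝ)
    (hAsymm : A.IsSymm)
    (hApos : ∀ s : Fin K → ℝ, s ≠ 0 → 0 < dotProduct s (A.mulVec s))
    (hAnn : ∀ k l, 0 ≤ A k l)
    (hcol : ∀ l, ∑ k, (Matrix.diagonal q * A) k l = 1)
    (μ : ℂ) (v : Fin K → ℂ) (hv : v ≠ 0)
    (heig : ((Matrix.diagonal q * A).map (Complex.ofReal)).mulVec v = μ • v) :
    μ.im = 0 ∧ 0 < μ.re ∧ μ.re ≤ 1 := by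
  -- entrywise eigen equation
  have hB : ∀ k l, (Matrix.diagonal q * A) k l = q k * A k l := by
    intro k l; rw [Matrix.diagonal_mul]
  have heq : ∀ k, (q k : ℂ) * ∑ l, (A k l : ℂ) * v l = μ * v k := by
    intro k
    have := congrFun heig k
    simpa [Matrix.mulVec, dotProduct, Matrix.map_apply, hB,
      Complex.ofReal_mul, mul_assoc, Finset.mul_sum] using this
  set a : Fin K → ℝ := fun k => (v k).re with ha
  set b : Fin K → ℝ := fun k => (v k).im with hb
  -- the weighted quadratic form identity : T = μ * N
  set T : ℂ := ∑ k, ∑ l, (starRingEnd ℂ) (v k) * ((A k l : ℂ) * v l) with hT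
  set N : ℝ := ∑ k, Complex.normSq (v k) / q k with hN
  have hNpos : 0 < N := by
    have hvk : ∃ k, v k ≠ 0 := by
      by_contra h; push_neg at h; exact hv (funext h)
    obtain ⟨k0, hk0⟩ := hvk
    apply Finset.sum_pos'
    · intro k _
      exact div_nonneg (Complex.normSq_nonneg _) (hq k).le
    · exact ⟨k0, Finset.mem_univ _, div_pos (Complex.normSq_pos.mpr hk0) (hq k0)⟩
  have hTN : T = μ * (N : ℂ) := by
    have h1 : ∀ k, ∑ l, (A k l : ℂ) * v l = μ * v k / (q k) := by
      intro k
      have hqk : (q k : ℂ) ≠ 0 := by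
        exact_mod_cast (hq k).ne'
      field_simp
      rw [mul_comm]
      exact (heq k)
    calc T = ∑ k, (starRingEnd ℂ) (v k) * (μ * v k / (q k)) := by
              rw [hT]; congr 1; ext k; rw [← Finset.mul_sum, h1 k]
      _ = μ * ∑ k, ((Complex.normSq (v k) : ℂ) / (q k)) := by
              rw [Finset.mul_sum]; congr 1; ext k
              rw [Complex.normSq_eq_conj_mul_self]; ring
      _ = μ * (N : ℂ) := by
              rw [hN]; push_cast; ring
  -- T is real with positive real part
  have hterm : ∀ k l, ((starRingEnd ℂ) (v k) * ((A k l : ℂ) * v l)).re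
      = A k l * (a k * a l + b k * b l) ∧
      ((starRingEnd ℂ) (v k) * ((A k l : ℂ) * v l)).im
      = A k l * (a k * b l - b k * a l) := by
    intro k l
    constructor <;>
      simp [Complex.mul_re, Complex.mul_im, ha, hb] <;> ring
  have hTim : T.im = 0 := by
    have : T.im = ∑ k, ∑ l, A k l * (a k * b l - b k * a l) := by
      rw [hT, Complex.im_sum]
      refine Finset.sum_congr rfl fun k _ => ?_
      rw [Complex.im_sum]
      exact Finset.sum_congr rfl fun l _ => (hterm k l).2
    rw [this]
    have hsymmAp : ∀ k l, A k l = A l k := fun k l => (Matrix.IsSymm.apply hAsymm l k)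
    have : ∑ k, ∑ l, A k l * (a k * b l - b k * a l)
        = ∑ k, ∑ l, A k l * (a k * b l) - ∑ k, ∑ l, A k l * (b k * a l) := by
      simp [Finset.sum_sub_distrib, mul_sub]
    rw [this]
    have : ∑ k, ∑ l, A k l * (a k * b l) = ∑ k, ∑ l, A k l * (b k * a l) := by
      rw [Finset.sum_comm]
      refine Finset.sum_congr rfl fun k _ => Finset.sum_congr rfl fun l _ => ?_
      rw [hsymmAp l k]; ring
    rw [this, sub_self]
  have quad : ∀ s : Fin K → ℝ, 0 ≤ ∑ k, ∑ l, A k l * (s k * s l) := by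
    intro s
    rcases eq_or_ne s 0 with hs | hs
    · simp [hs]
    · have := hApos s hs
      have hqf : dotProduct s (A.mulVec s) = ∑ k, ∑ l, A k l * (s k * s l) := by
        simp [dotProduct, Matrix.mulVec, Finset.mul_sum]
        refine Finset.sum_congr rfl fun k _ => Finset.sum_congr rfl fun l _ => by ring
      linarith [hqf ▸ this]
  have hTre : 0 < T.re := by
    have hre : T.re = ∑ k, ∑ l, A k l * (a k * a l) + ∑ k, ∑ l, A k l * (b k * b l) := by
      rw [hT, Complex.re_sum]
      rw [← Finset.sum_add_distrib]
      refine Finset.sum_congr rfl fun k _ => ?_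
      rw [Complex.re_sum, ← Finset.sum_add_distrib]
      refine Finset.sum_congr rfl fun l _ => ?_
      rw [(hterm k l).1]; ring
    have hab : a ≠ 0 ∨ b ≠ 0 := by
      by_contra h
      push_neg at h
      apply hv
      funext k
      have h1 := congrFun h.1 k
      have h2 := congrFun h.2 k
      simp only [ha, hb, Pi.zero_apply] at h1 h2
      exact Complex.ext h1 h2
    have hqf : ∀ s : Fin K → ℝ, s ≠ 0 → 0 < ∑ k, ∑ l, A k l * (s k * s l) := by
      intro s hs
      have := hApos s hs
      have hqf : dotProduct s (A.mulVec s) = ∑ k, ∑ l, A k l * (s k * s l) := by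
        simp [dotProduct, Matrix.mulVec, Finset.mul_sum]
        refine Finset.sum_congr rfl fun k _ => Finset.sum_congr rfl fun l _ => by ring
      linarith [hqf ▸ this]
    rcases hab with hne | hne
    · have := hqf a hne; have := quad b; linarith [hre]
    · have := hqf b hne; have := quad a; linarith [hre]
  -- conclude realness and positivity of μ
  have hμim : μ.im = 0 := by
    have : T.im = μ.im * N := by
      rw [hTN]; simp [Complex.mul_im]
    rw [hTim] at this
    have := this.symm
    rcases mul_eq_zero.mp this with h | h
    · exact h
    · exact absurd h hNpos.ne'
  have hμre : 0 < μ.re := by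
    have : T.re = μ.re * N := by
      rw [hTN]; simp [Complex.mul_re]
    rw [this] at hTre
    nlinarith [hNpos]
  -- |μ| ≤ 1 via column sums
  have hμle : μ.re ≤ 1 := by
    set S : ℝ := ∑ k, ‖v k‖ with hS
    have hSpos : 0 < S := by
      have hvk : ∃ k, v k ≠ 0 := by
        by_contra h; push_neg at h; exact hv (funext h)
      obtain ⟨k0, hk0⟩ := hvk
      apply Finset.sum_pos'
      · intro k _; exact norm_nonneg _
      · exact ⟨k0, Finset.mem_univ _, (norm_pos_iff.mpr hk0)⟩
    have hent : ∀ k, ‖μ * v k‖ ≤ ∑ l, (q k * A k l) * ‖v l‖ := by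
      intro k
      have h1 : μ * v k = ∑ l, ((q k * A k l : ℝ) : ℂ) * v l := by
        rw [← heq k]
        push_cast
        rw [Finset.mul_sum]
        exact Finset.sum_congr rfl fun l _ => by ring
      rw [h1]
      refine le_trans (norm_sum_le _ _) ?_
      refine Finset.sum_le_sum fun l _ => ?_
      rw [norm_mul, Complex.norm_real, Real.norm_eq_abs, abs_of_nonneg (mul_nonneg (hq k).le (hAnn k l))]
    have hsum : ‖μ‖ * S ≤ S := by
      have h2 : ∑ k, ‖μ * v k‖ = ‖μ‖ * S := by
        rw [hS, Finset.mul_sum]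
        exact Finset.sum_congr rfl fun k _ => norm_mul _ _
      have h3 : ∑ k, ∑ l, (q k * A k l) * ‖v l‖ = S := by
        rw [Finset.sum_comm]
        rw [hS]
        refine Finset.sum_congr rfl fun l _ => ?_
        rw [← Finset.sum_mul]
        have : ∑ k, q k * A k l = 1 := by
          have := hcol l
          simpa [hB] using this
        rw [this, one_mul]
      calc ‖μ‖ * S = ∑ k, ‖μ * v k‖ := h2.symm
        _ ≤ ∑ k, ∑ l, (q k * A k l) * ‖v l‖ :=
            Finset.sum_le_sum fun k _ => hent k
        _ = S := h3
    have habs : ‖μ‖ ≤ 1 := by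
      by_contra h
      push_neg at h
      nlinarith [hsum, hSpos]
    exact le_trans (Complex.re_le_norm μ) habs
  exact ⟨hμim, hμre, hμle⟩

/-- Let `q ∈ ℝ^K` have positive entries and let `A` be symmetric
positive definite with nonnegative entries such that `B = diag(q)·A` has unit
column sums. Then every complex eigenvalue of `B` is real and lies in `(0, 1]`,
and every complex eigenvalue of `E_K − B` is real, lies in `[0, 1)`, and has
absolute value strictly less than 1. -/
theorem eigenvalues_of_stable_iteration
    (K : ℕ) (hK : 2 ≤ K)
    (q : Fin K → ℝ) (hq : ∀ k, 0 < q k)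
    (A : Matrix (Fin K) (Fin K) ℝ)
    (hAsymm : A.IsSymm)
    (hApos : ∀ s : Fin K → ℝ, s ≠ 0 → 0 < dotProduct s (A.mulVec s))
    (hAnn : ∀ k l, 0 ≤ A k l)
    (hcol : ∀ l, ∑ k, (Matrix.diagonal q * A) k l = 1) :
    (∀ (μ : ℂ) (v : Fin K → ℂ), v ≠ 0 →
        ((Matrix.diagonal q * A).map (Complex.ofReal)).mulVec v = μ • v →
        μ.im = 0 ∧ 0 < μ.re ∧ μ.re ≤ 1) ∧
    (∀ (μ : ℂ) (v : Fin K → ℂ), v ≠ 0 →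
        (((1 : Matrix (Fin K) (Fin K) ℝ) - Matrix.diagonal q * A).map
            (Complex.ofReal)).mulVec v = μ • v →
        μ.im = 0 ∧ 0 ≤ μ.re ∧ μ.re < 1 ∧ ‖μ‖ < 1) := by
  constructor
  · intro μ v hv heig
    exact eig_key K q hq A hAsymm hApos hAnn hcol μ v hv heig
  · intro μ v hv heig
    have heig' : ((Matrix.diagonal q * A).map (Complex.ofReal)).mulVec v
        = (1 - μ) • v := by
      have hmap : ((1 : Matrix (Fin K) (Fin K) ℝ) - Matrix.diagonal q * A).map
          (Complex.ofReal)
          = 1 - (Matrix.diagonal q * A).map (Complex.ofReal) := by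
        ext i j
        by_cases h : i = j <;>
          simp [Matrix.map_apply, Matrix.sub_apply, Matrix.one_apply, h]
      rw [hmap, Matrix.sub_mulVec, Matrix.one_mulVec] at heig
      have : ((Matrix.diagonal q * A).map (Complex.ofReal)).mulVec v
          = v - μ • v := by
        rw [← heig]; abel
      rw [this, sub_smul, one_smul]
    obtain ⟨him, hre, hle⟩ := eig_key K q hq A hAsymm hApos hAnn hcol (1 - μ) v hv heig'
    simp only [Complex.sub_im, Complex.one_im, Complex.sub_re, Complex.one_re] at him hre hle
    have hμim : μ.im = 0 := by linarith
    have h0 : 0 ≤ μ.re := by linarith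
    have h1 : μ.re < 1 := by linarith
    refine ⟨hμim, h0, h1, ?_⟩
    have : μ = ((μ.re : ℝ) : ℂ) := by
      apply Complex.ext <;> simp [hμim]
    rw [this, Complex.norm_real, Real.norm_eq_abs, abs_of_nonneg h0]
    exact h1
end
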